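/- Let F be a field of characteristic 2 and D a finite-dimensional central division algebra over F carrying an F-linear involution. Then u⁺(D) = u⁺_d(D) + u⁻(D), where the sum is understood in ℕ ∪ {∞}. -/

import Mathlib

noncomputable section GenQuadForm

open scoped TensorProduct

/-- An `F`-linear involution (of the first kind) on the `F`-algebra `D`. -/
def IsFInvolution (F : Type*) {D : Type*} [Field F] [Ring D] [Algebra F D]
    (θ : D → D) : Prop :=
  (∀ a b : D, θ (a + b) = θ a + θ b) ∧
  (∀ (c : F) (a : D), θ (c • a) = c • θ a) ∧
  (∀ a b : D, θ (a * b) = θ b * θ a) ∧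
  (∀ a : D, θ (θ a) = a)

/-- `Sym(D,θ)`, the set of symmetric elements. -/
def SymSet {D : Type*} (θ : D → D) : Set D := {a | θ a = a}

/-- `Alt(D,θ) = {a - θ a | a ∈ D}`, the set of alternating elements. -/
def AltSet {D : Type*} [Ring D] (θ : D → D) : Set D := {a | ∃ b : D, a = b - θ b}

/-- The right scalar multiple of a vector `x ∈ Dⁿ` by `d ∈ D`. -/
def rsmul {D : Type*} [Ring D] {n : ℕ} (x : Fin n → D) (d : D) : Fin n → D :=
  fun i => x i * d

/-- `h` is a hermitian form on the (right) `D`-vector space `Dⁿ` with respect to the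
involution `θ`: bi-additive, sesquilinear and `θ`-symmetric. (Every `n`-dimensional right
`D`-vector space is isomorphic to `Dⁿ`.) -/
def IsHermForm {D : Type*} [Ring D] (θ : D → D) (n : ℕ)
    (h : (Fin n → D) → (Fin n → D) → D) : Prop :=
  (∀ x x' y : Fin n → D, h (x + x') y = h x y + h x' y) ∧
  (∀ x y y' : Fin n → D, h x (y + y') = h x y + h x y') ∧
  (∀ (x y : Fin n → D) (d₁ d₂ : D), h (rsmul x d₁) (rsmul y d₂) = θ d₁ * h x y * d₂) ∧
  (∀ x y : Fin n → D, h y x = θ (h x y))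

/-- A hermitian form is anisotropic if `h x x = 0` only for `x = 0`. -/
def HermAnisotropic {D : Type*} [Ring D] (n : ℕ)
    (h : (Fin n → D) → (Fin n → D) → D) : Prop :=
  ∀ x : Fin n → D, h x x = 0 → x = 0

/-- A hermitian form is alternating if `h x x ∈ Alt(D,θ)` for all `x`. -/
def HermAlternating {D : Type*} [Ring D] (θ : D → D) (n : ℕ)
    (h : (Fin n → D) → (Fin n → D) → D) : Prop :=
  ∀ x : Fin n → D, h x x ∈ AltSet θ

/-- A hermitian form is direct if `h x x ∉ Alt(D,θ)` for all `x ≠ 0`. -/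
def HermDirect {D : Type*} [Ring D] (θ : D → D) (n : ℕ)
    (h : (Fin n → D) → (Fin n → D) → D) : Prop :=
  ∀ x : Fin n → D, x ≠ 0 → h x x ∉ AltSet θ

/-- A hermitian form is nondegenerate if its radical is trivial. -/
def HermNondegenerate {D : Type*} [Ring D] (n : ℕ)
    (h : (Fin n → D) → (Fin n → D) → D) : Prop :=
  ∀ x : Fin n → D, (∀ y : Fin n → D, h x y = 0) → x = 0

/-- The diagonal hermitian form `⟨a₁,…,aₙ⟩ʰ` over `(D,θ)`. -/
def diagHerm {D : Type*} [Ring D] (θ : D → D) {n : ℕ} (a : Fin n → D) :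
    (Fin n → D) → (Fin n → D) → D :=
  fun x y => ∑ i, θ (x i) * a i * y i

/-- `q` (a representative function of a map `Dⁿ → D/Alt(D,θ)`) is a generalised quadratic form
over `(D,θ)` with polar form `h`: all defining identities are required modulo `Alt(D,θ)`. -/
def IsQuadForm {D : Type*} [Ring D] (θ : D → D) (n : ℕ)
    (q : (Fin n → D) → D) (h : (Fin n → D) → (Fin n → D) → D) : Prop :=
  IsHermForm θ n h ∧
  (∀ (x : Fin n → D) (d : D), q (rsmul x d) - θ d * q x * d ∈ AltSet θ) ∧
  (∀ x y : Fin n → D, q (x + y) - q x - q y - h x y ∈ AltSet θ)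

/-- A quadratic form over `(D,θ)` is isotropic if it vanishes modulo `Alt(D,θ)` at some
nonzero vector. -/
def QuadIsotropic {D : Type*} [Ring D] (θ : D → D) (n : ℕ)
    (q : (Fin n → D) → D) : Prop :=
  ∃ x : Fin n → D, x ≠ 0 ∧ q x ∈ AltSet θ

/-- A quadratic form over `(D,θ)` is anisotropic if it is not isotropic. -/
def QuadAnisotropic {D : Type*} [Ring D] (θ : D → D) (n : ℕ)
    (q : (Fin n → D) → D) : Prop :=
  ∀ x : Fin n → D, x ≠ 0 → q x ∉ AltSet θ

/-- A quadratic form over `(D,θ)` represents `a ∈ D` if its value at some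
nonzero vector is `a + Alt(D,θ)`. -/
def QuadRepresents {D : Type*} [Ring D] (θ : D → D) (n : ℕ)
    (q : (Fin n → D) → D) (a : D) : Prop :=
  ∃ x : Fin n → D, x ≠ 0 ∧ q x - a ∈ AltSet θ

/-- A quadratic form over `(D,θ)` is totally singular if its polar form is identically zero. -/
def QuadTotallySingular {D : Type*} [Ring D] (θ : D → D) (n : ℕ)
    (q : (Fin n → D) → D) : Prop :=
  IsQuadForm θ n q (fun _ _ => 0)

/-- A quadratic form over `(D,θ)` is nonsingular if its polar form is nondegenerate. -/
def QuadNonsingular {D : Type*} [Ring D] (θ : D → D) (n : ℕ)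
    (q : (Fin n → D) → D) : Prop :=
  ∃ h, IsQuadForm θ n q h ∧ HermNondegenerate n h

/-- The diagonal quadratic form `⟨a₁,…,aₙ⟩` over `(D,θ)`. -/
def diagQuad {D : Type*} [Ring D] (θ : D → D) {n : ℕ} (a : Fin n → D) :
    (Fin n → D) → D :=
  fun x => ∑ i, θ (x i) * a i * x i

/-- `u⁺(D)`: the supremum of the dimensions of anisotropic hermitian forms over `(D,θ)`. -/
def uHermPlus {D : Type*} [DivisionRing D] (θ : D → D) : ℕ∞ :=
  ⨆ n ∈ {n : ℕ | ∃ h, IsHermForm θ n h ∧ HermAnisotropic n h}, (n : ℕ∞)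

/-- `u⁺_d(D)`: the supremum of the dimensions of direct hermitian forms over `(D,θ)`. -/
def uHermPlusDirect {D : Type*} [DivisionRing D] (θ : D → D) : ℕ∞ :=
  ⨆ n ∈ {n : ℕ | ∃ h, IsHermForm θ n h ∧ HermDirect θ n h}, (n : ℕ∞)

/-- `u⁻(D)`: the supremum of the dimensions of anisotropic alternating hermitian forms
over `(D,θ)`. -/
def uHermMinus {D : Type*} [DivisionRing D] (θ : D → D) : ℕ∞ :=
  ⨆ n ∈ {n : ℕ | ∃ h, IsHermForm θ n h ∧ HermAnisotropic n h ∧ HermAlternating θ n h},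
    (n : ℕ∞)

/-- `u(D)`: the supremum of the dimensions of anisotropic (generalised) quadratic forms
over `(D,θ)`. -/
def uQuad {D : Type*} [DivisionRing D] (θ : D → D) : ℕ∞ :=
  ⨆ n ∈ {n : ℕ | ∃ q h, IsQuadForm θ n q h ∧ QuadAnisotropic θ n q}, (n : ℕ∞)

/-- `ũ(D)`: the supremum of the dimensions of anisotropic nonsingular quadratic forms
over `(D,θ)`. -/
def uQuadTilde {D : Type*} [DivisionRing D] (θ : D → D) : ℕ∞ :=
  ⨆ n ∈ {n : ℕ | ∃ q, QuadNonsingular θ n q ∧ QuadAnisotropic θ n q}, (n : ℕ∞)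

/-- The polar form of a quadratic form over a field. -/
def polarF {F : Type*} [Field F] {n : ℕ} (q : (Fin n → F) → F) :
    (Fin n → F) → (Fin n → F) → F :=
  fun x y => q (x + y) - q x - q y

/-- A quadratic form over the field `F` (on `Fⁿ`): `q (a • x) = a² q x` and the polar
form is bilinear. -/
def IsQuadFormField {F : Type*} [Field F] (n : ℕ) (q : (Fin n → F) → F) : Prop :=
  (∀ (a : F) (x : Fin n → F), q (a • x) = a ^ 2 * q x) ∧
  (∀ x x' y : Fin n → F, polarF q (x + x') y = polarF q x y + polarF q x' y) ∧
  (∀ (a : F) (x y : Fin n → F), polarF q (a • x) y = a * polarF q x y)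

def QFieldNonsingular {F : Type*} [Field F] (n : ℕ) (q : (Fin n → F) → F) : Prop :=
  ∀ x : Fin n → F, (∀ y : Fin n → F, polarF q x y = 0) → x = 0

def QFieldTotallySingular {F : Type*} [Field F] (n : ℕ) (q : (Fin n → F) → F) : Prop :=
  ∀ x y : Fin n → F, q (x + y) = q x + q y

def QFieldAnisotropic {F : Type*} [Field F] (n : ℕ) (q : (Fin n → F) → F) : Prop :=
  ∀ x : Fin n → F, q x = 0 → x = 0

/-- `ũ(F)`: the supremum of the dimensions of anisotropic nonsingular quadratic forms
over the field `F`. -/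
def uTildeField (F : Type*) [Field F] : ℕ∞ :=
  ⨆ n ∈ {n : ℕ | ∃ q : (Fin n → F) → F,
      IsQuadFormField n q ∧ QFieldNonsingular n q ∧ QFieldAnisotropic n q}, (n : ℕ∞)

/-- The subfield `F² = {a² : a ∈ F}` of a field of characteristic `2`. -/
def sqSubfield (F : Type*) [Field F] [CharP F 2] : Subfield F :=
  (frobenius F 2).fieldRange

/-- `[F : F²]` as an element of `ℕ ∪ {∞}`. -/
def sqIndex (F : Type*) [Field F] [CharP F 2] : ℕ∞ :=
  Cardinal.toENat (Module.rank (sqSubfield F) F)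

/-- `℘(F) = {a² + a : a ∈ F}`. -/
def wpSet (F : Type*) [Field F] : Set F := {a | ∃ b : F, a = b ^ 2 + b}


set_option linter.unusedSectionVars false

namespace Stmt3Aux

variable {F D : Type*} [Field F] [CharP F 2] [DivisionRing D] [Algebra F D] {θ : D → D}

/-- rsmul basic facts -/
lemma rsmul_zero {n : ℕ} (v : Fin n → D) : rsmul v (0 : D) = 0 := by
  funext i; simp [rsmul]

lemma rsmul_add_right {n : ℕ} (v : Fin n → D) (c c' : D) :
    rsmul v (c + c') = rsmul v c + rsmul v c' := by
  funext i; simp [rsmul, mul_add]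

lemma rsmul_rsmul {n : ℕ} (v : Fin n → D) (c d : D) :
    rsmul (rsmul v c) d = rsmul v (c * d) := by
  funext i; simp [rsmul, mul_assoc]

lemma sub_rsmul {n : ℕ} (v w : Fin n → D) (d : D) :
    rsmul (v - w) d = rsmul v d - rsmul w d := by
  funext i; simp [rsmul, sub_mul]

lemma rsmul_one {n : ℕ} (v : Fin n → D) : rsmul v 1 = v := by
  funext i; simp [rsmul]

section theta

variable (hθ : IsFInvolution F θ)
include hθ

lemma theta_zero : θ 0 = 0 := by
  have h := hθ.1 0 0
  rw [add_zero] at h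
  exact (add_eq_left.mp h.symm)

lemma theta_one : θ 1 = 1 := by
  have h1 : θ 1 * θ 1 = θ 1 := by
    have := hθ.2.2.1 1 1
    rw [one_mul] at this
    exact this.symm
  have hne : θ 1 ≠ 0 := by
    intro h
    have h2 := hθ.2.2.2 1
    rw [h, theta_zero hθ] at h2
    exact zero_ne_one h2
  exact mul_right_cancel₀ hne (h1.trans (one_mul (θ 1)).symm)

lemma theta_neg (a : D) : θ (-a) = -θ a := by
  have h := hθ.1 a (-a)
  rw [add_neg_cancel, theta_zero hθ] at h
  exact eq_neg_of_add_eq_zero_right h.symm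

lemma theta_sub (a b : D) : θ (a - b) = θ a - θ b := by
  rw [sub_eq_add_neg, hθ.1, theta_neg hθ, sub_eq_add_neg]

/-- char 2 in D -/
lemma neg_self_D (a : D) : -a = a := by
  haveI : CharP D 2 := charP_of_injective_ringHom (algebraMap F D).injective 2
  exact CharTwo.neg_eq a

/-- Alt set facts -/
lemma alt_zero : (0 : D) ∈ AltSet θ :=
  ⟨0, by rw [theta_zero hθ, sub_zero]⟩

lemma alt_add {a b : D} (ha : a ∈ AltSet θ) (hb : b ∈ AltSet θ) : a + b ∈ AltSet θ := by
  obtain ⟨x, rfl⟩ := ha; obtain ⟨y, rfl⟩ := hb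
  exact ⟨x + y, by rw [hθ.1]; abel⟩

lemma alt_neg {a : D} (ha : a ∈ AltSet θ) : -a ∈ AltSet θ := by
  obtain ⟨x, rfl⟩ := ha
  exact ⟨θ x, by rw [hθ.2.2.2]; abel⟩

lemma alt_conj {a : D} (ha : a ∈ AltSet θ) (d : D) : θ d * a * d ∈ AltSet θ := by
  obtain ⟨x, rfl⟩ := ha
  refine ⟨θ d * x * d, ?_⟩
  have : θ (θ d * x * d) = θ d * (θ x * d) := by
    rw [hθ.2.2.1 (θ d * x) d, hθ.2.2.1 (θ d) x, hθ.2.2.2]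
  rw [this]; simp only [mul_sub, sub_mul, mul_assoc]

lemma alt_add_theta (c : D) : c + θ c ∈ AltSet θ :=
  ⟨c, by rw [sub_eq_add_neg, neg_self_D hθ]⟩

end theta

section herm

variable {n : ℕ} {h : (Fin n → D) → (Fin n → D) → D}

lemma h_zero_right (hh : IsHermForm θ n h) (x : Fin n → D) : h x 0 = 0 := by
  have := hh.2.1 x 0 0
  rw [add_zero] at this
  exact (add_eq_left.mp this.symm)

lemma h_zero_left (hh : IsHermForm θ n h) (x : Fin n → D) : h 0 x = 0 := by
  have := hh.1 0 0 x
  rw [add_zero] at this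
  exact (add_eq_left.mp this.symm)

lemma h_smul_right (hθ : IsFInvolution F θ) (hh : IsHermForm θ n h) (x y : Fin n → D) (d : D) :
    h x (rsmul y d) = h x y * d := by
  have := hh.2.2.1 x y 1 d
  rw [rsmul_one, theta_one hθ, one_mul] at this
  exact this

lemma h_smul_left (hh : IsHermForm θ n h) (x y : Fin n → D) (d : D) :
    h (rsmul x d) y = θ d * h x y := by
  have := hh.2.2.1 x y d 1
  rw [rsmul_one, mul_one] at this
  exact this

lemma h_sub_right (hh : IsHermForm θ n h) (x y y' : Fin n → D) :
    h x (y - y') = h x y - h x y' := by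
  have := hh.2.1 x (y - y') y'
  rw [sub_add_cancel] at this
  rw [eq_sub_iff_add_eq, ← this]

lemma h_sum_right (hh : IsHermForm θ n h) {ι : Type*} (x : Fin n → D)
    (s : Finset ι) (y : ι → (Fin n → D)) :
    h x (∑ j ∈ s, y j) = ∑ j ∈ s, h x (y j) := by
  classical
  induction s using Finset.induction with
  | empty => simp [h_zero_right hh]
  | insert _ _ hj ih =>
    rw [Finset.sum_insert hj, Finset.sum_insert hj, hh.2.1, ih]

/-- span of vectors with alternating values is alternating -/
lemma span_alt (hθ : IsFInvolution F θ) (hh : IsHermForm θ n h) {m : ℕ}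
    (w : Fin m → (Fin n → D)) (hw : ∀ j, h (w j) (w j) ∈ AltSet θ) (d : Fin m → D) :
    h (∑ j, rsmul (w j) (d j)) (∑ j, rsmul (w j) (d j)) ∈ AltSet θ := by
  classical
  suffices H : ∀ s : Finset (Fin m),
      h (∑ j ∈ s, rsmul (w j) (d j)) (∑ j ∈ s, rsmul (w j) (d j)) ∈ AltSet θ from H _
  intro s
  induction s using Finset.induction with
  | empty => simp only [Finset.sum_empty]; rw [h_zero_right hh]; exact alt_zero hθ
  | @insert j s hj ih =>
    rw [Finset.sum_insert hj]
    set u := rsmul (w j) (d j) with hu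
    set t := ∑ j ∈ s, rsmul (w j) (d j) with ht
    have expand : h (u + t) (u + t) = (h u u + h t t) + (h u t + θ (h u t)) := by
      rw [hh.1, hh.2.1, hh.2.1, hh.2.2.2 u t]
      abel
    rw [expand]
    refine alt_add hθ (alt_add hθ ?_ ih) (alt_add_theta hθ _)
    rw [hu]
    have := hh.2.2.1 (w j) (w j) (d j) (d j)
    rw [this]
    exact alt_conj hθ (hw j) (d j)

/-- pullback of a hermitian form along a right-linear map -/
lemma pullback_herm (hh : IsHermForm θ n h) {p : ℕ} (Ψ : (Fin p → D) → (Fin n → D))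
    (Ψadd : ∀ x y, Ψ (x + y) = Ψ x + Ψ y)
    (Ψsmul : ∀ x d, Ψ (rsmul x d) = rsmul (Ψ x) d) :
    IsHermForm θ p (fun x y => h (Ψ x) (Ψ y)) := by
  refine ⟨?_, ?_, ?_, ?_⟩
  · intro x x' y; simp only [Ψadd]; exact hh.1 _ _ _
  · intro x y y'; simp only [Ψadd]; exact hh.2.1 _ _ _
  · intro x y d₁ d₂; simp only [Ψsmul]; exact hh.2.2.1 _ _ _ _
  · intro x y; exact hh.2.2.2 _ _

end herm

/-- Key decomposition: an anisotropic hermitian form of dimension `n` yields a direct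
form of dimension `k` and an independent family of `m` alternating vectors, `k + m = n`. -/
lemma key (hθ : IsFInvolution F θ) :
    ∀ (n : ℕ) (h : (Fin n → D) → (Fin n → D) → D),
      IsHermForm θ n h → HermAnisotropic n h →
      ∃ (k m : ℕ) (g : (Fin k → D) → (Fin k → D) → D) (w : Fin m → (Fin n → D)),
        k + m = n ∧ IsHermForm θ k g ∧ HermDirect θ k g ∧
        (∀ j, h (w j) (w j) ∈ AltSet θ) ∧
        (∀ d : Fin m → D, ∑ j, rsmul (w j) (d j) = 0 → d = 0) := by
  intro n
  induction n using Nat.strong_induction_on with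
  | _ n IH =>
  intro h hh han
  by_cases hdir : HermDirect θ n h
  · refine ⟨n, 0, h, Fin.elim0, Nat.add_zero n, hh, hdir, fun j => j.elim0, ?_⟩
    intro d _
    funext j; exact j.elim0
  · unfold HermDirect at hdir
    push_neg at hdir
    obtain ⟨v₀, hv₀ne, hv₀alt⟩ := hdir
    cases n with
    | zero =>
      exact absurd (funext fun i => i.elim0 : v₀ = 0) hv₀ne
    | succ n' =>
      set a := h v₀ v₀ with ha
      have ha0 : a ≠ 0 := fun h0 => hv₀ne (han v₀ h0)
      obtain ⟨i₀, hi₀⟩ : ∃ i, v₀ i ≠ 0 := by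
        by_contra hc; push_neg at hc; exact hv₀ne (funext hc)
      -- the coordinate injection J
      set J : (Fin n' → D) → (Fin (n' + 1) → D) := fun x => i₀.insertNth 0 x with hJdef
      have Jsame : ∀ x, J x i₀ = 0 := by
        intro x; rw [hJdef]; exact Fin.insertNth_apply_same (α := fun _ => D) i₀ 0 x
      have Jabove : ∀ x j, J x (i₀.succAbove j) = x j := by
        intro x j; rw [hJdef]; exact Fin.insertNth_apply_succAbove (α := fun _ => D) i₀ 0 x j
      have Jadd : ∀ x y, J (x + y) = J x + J y := by
        intro x y; funext i
        by_cases hi : i = i₀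
        · subst hi; simp [Jsame]
        · obtain ⟨j, rfl⟩ := Fin.exists_succAbove_eq hi
          simp [Jabove]
      have Jsmul : ∀ x d, J (rsmul x d) = rsmul (J x) d := by
        intro x d; funext i
        by_cases hi : i = i₀
        · subst hi; simp [Jsame, rsmul]
        · obtain ⟨j, rfl⟩ := Fin.exists_succAbove_eq hi
          simp [Jabove, rsmul]
      have Jinj : ∀ x, J x = 0 → x = 0 := by
        intro x hx; funext j
        have := congrFun hx (i₀.succAbove j)
        rwa [Jabove] at this
      -- the projection Ψ into the orthogonal complement of v₀
      set Ψ : (Fin n' → D) → (Fin (n' + 1) → D) :=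
        fun x => J x - rsmul v₀ (a⁻¹ * h v₀ (J x)) with hΨdef
      have Ψadd : ∀ x y, Ψ (x + y) = Ψ x + Ψ y := by
        intro x y
        simp only [hΨdef, Jadd, hh.2.1, mul_add, rsmul_add_right]
        abel
      have Ψsmul : ∀ x d, Ψ (rsmul x d) = rsmul (Ψ x) d := by
        intro x d
        simp only [hΨdef, Jsmul, h_smul_right hθ hh, sub_rsmul, rsmul_rsmul, mul_assoc]
      have Ψorth : ∀ x, h v₀ (Ψ x) = 0 := by
        intro x
        simp only [hΨdef]
        rw [h_sub_right hh, h_smul_right hθ hh, ← ha, ← mul_assoc, mul_inv_cancel₀ ha0,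
          one_mul, sub_self]
      have Ψinj : ∀ x, Ψ x = 0 → x = 0 := by
        intro x hx
        have hx' : J x = rsmul v₀ (a⁻¹ * h v₀ (J x)) := by
          have := sub_eq_zero.mp hx
          exact this
        have hc : v₀ i₀ * (a⁻¹ * h v₀ (J x)) = 0 := by
          have := congrFun hx' i₀
          rw [Jsame] at this
          exact this.symm
        have hc0 : a⁻¹ * h v₀ (J x) = 0 := by
          rcases mul_eq_zero.mp hc with h1 | h2
          · exact absurd h1 hi₀
          · exact h2
        rw [hc0, rsmul_zero] at hx'
        exact Jinj x hx'
      -- the pulled-back form h'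
      set h' : (Fin n' → D) → (Fin n' → D) → D := fun x y => h (Ψ x) (Ψ y) with hh'def
      have hh' : IsHermForm θ n' h' := pullback_herm hh Ψ Ψadd Ψsmul
      have han' : HermAnisotropic n' h' := fun x hx => Ψinj x (han _ hx)
      obtain ⟨k, m', g, w', hkm, hg1, hg2, hwalt, hwind⟩ :=
        IH n' (Nat.lt_succ_self n') h' hh' han'
      refine ⟨k, m' + 1, g, Fin.cons v₀ (fun j => Ψ (w' j)), by omega, hg1, hg2, ?_, ?_⟩
      · intro j
        refine Fin.cases ?_ ?_ j
        · simpa using hv₀alt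
        · intro j'
          simpa using hwalt j'
      · intro d hd
        rw [Fin.sum_univ_succ] at hd
        simp only [Fin.cons_zero, Fin.cons_succ] at hd
        have hsum : ∑ j : Fin m', rsmul (Ψ (w' j)) (d j.succ)
            = Ψ (∑ j : Fin m', rsmul (w' j) (d j.succ)) := by
          have e1 : ∀ j : Fin m', rsmul (Ψ (w' j)) (d j.succ)
              = Ψ (rsmul (w' j) (d j.succ)) := fun j => (Ψsmul _ _).symm
          simp only [e1]
          exact (map_sum (AddMonoidHom.mk' Ψ Ψadd) _ _).symm
        rw [hsum] at hd
        have hd0 : a * d 0 = 0 := by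
          have h1 := congrArg (h v₀) hd
          rw [h_zero_right hh, hh.2.1, h_smul_right hθ hh, Ψorth, add_zero] at h1
          exact h1
        have hd0' : d 0 = 0 := by
          rcases mul_eq_zero.mp hd0 with h1 | h2
          · exact absurd h1 ha0
          · exact h2
        rw [hd0', rsmul_zero, zero_add] at hd
        have hrest := hwind _ (Ψinj _ hd)
        funext j
        refine Fin.cases ?_ ?_ j
        · exact hd0'
        · intro j'
          exact congrFun hrest j'


/-- sum of right-scaled vectors -/
lemma sum_rsmul {n : ℕ} {ι : Type*} (s : Finset ι) (v : ι → (Fin n → D)) (d : D) :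
    ∑ j ∈ s, rsmul (v j) d = rsmul (∑ j ∈ s, v j) d := by
  funext i
  simp only [Finset.sum_apply, rsmul, Finset.sum_mul]

/-- From the independent alternating family we get an anisotropic alternating form. -/
lemma minus_of_family (hθ : IsFInvolution F θ) {n m : ℕ}
    {h : (Fin n → D) → (Fin n → D) → D} (hh : IsHermForm θ n h) (han : HermAnisotropic n h)
    (w : Fin m → (Fin n → D)) (hwalt : ∀ j, h (w j) (w j) ∈ AltSet θ)
    (hwind : ∀ d : Fin m → D, ∑ j, rsmul (w j) (d j) = 0 → d = 0) :
    ∃ f, IsHermForm θ m f ∧ HermAnisotropic m f ∧ HermAlternating θ m f := by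
  classical
  set Sg : (Fin m → D) → (Fin n → D) := fun x => ∑ j, rsmul (w j) (x j) with hSg
  have Sgadd : ∀ x y, Sg (x + y) = Sg x + Sg y := by
    intro x y
    rw [hSg]
    simp only [Pi.add_apply, rsmul_add_right]
    exact Finset.sum_add_distrib
  have Sgsmul : ∀ x d, Sg (rsmul x d) = rsmul (Sg x) d := by
    intro x d
    rw [hSg]
    simp only [rsmul]
    calc (∑ j, rsmul (w j) (x j * d))
        = ∑ j, rsmul (rsmul (w j) (x j)) d := by
          simp only [rsmul_rsmul]
      _ = rsmul (∑ j, rsmul (w j) (x j)) d := sum_rsmul _ _ _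
  refine ⟨fun x y => h (Sg x) (Sg y), pullback_herm hh Sg Sgadd Sgsmul, ?_, ?_⟩
  · intro x hx
    exact hwind x (han _ hx)
  · intro x
    exact span_alt hθ hh w hwalt x

/-- Orthogonal sum of a direct form and an anisotropic alternating form is anisotropic. -/
lemma glue (hθ : IsFInvolution F θ) {k m : ℕ}
    {g : (Fin k → D) → (Fin k → D) → D} (hg : IsHermForm θ k g) (hgd : HermDirect θ k g)
    {f : (Fin m → D) → (Fin m → D) → D} (hf : IsHermForm θ m f)
    (hfa : HermAnisotropic m f) (hfalt : HermAlternating θ m f) :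
    ∃ H, IsHermForm θ (k + m) H ∧ HermAnisotropic (k + m) H := by
  refine ⟨fun x y => g (fun i => x (Fin.castAdd m i)) (fun i => y (Fin.castAdd m i))
      + f (fun j => x (Fin.natAdd k j)) (fun j => y (Fin.natAdd k j)), ⟨?_, ?_, ?_, ?_⟩, ?_⟩
  · intro x x' y
    show g ((fun i => x (Fin.castAdd m i)) + (fun i => x' (Fin.castAdd m i))) _
        + f ((fun j => x (Fin.natAdd k j)) + (fun j => x' (Fin.natAdd k j))) _ = _
    rw [hg.1, hf.1]
    exact add_add_add_comm _ _ _ _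
  · intro x y y'
    show g _ ((fun i => y (Fin.castAdd m i)) + (fun i => y' (Fin.castAdd m i)))
        + f _ ((fun j => y (Fin.natAdd k j)) + (fun j => y' (Fin.natAdd k j))) = _
    rw [hg.2.1, hf.2.1]
    exact add_add_add_comm _ _ _ _
  · intro x y d₁ d₂
    show g (rsmul (fun i => x (Fin.castAdd m i)) d₁) (rsmul (fun i => y (Fin.castAdd m i)) d₂)
        + f (rsmul (fun j => x (Fin.natAdd k j)) d₁) (rsmul (fun j => y (Fin.natAdd k j)) d₂) = _
    rw [hg.2.2.1, hf.2.2.1, mul_add, add_mul]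
  · intro x y
    show g _ _ + f _ _ = _
    rw [hg.2.2.2, hf.2.2.2, ← hθ.1]
  · intro x hx
    set x₁ : Fin k → D := fun i => x (Fin.castAdd m i) with hx₁
    set x₂ : Fin m → D := fun j => x (Fin.natAdd k j) with hx₂
    have hx' : g x₁ x₁ + f x₂ x₂ = 0 := hx
    have halt : g x₁ x₁ ∈ AltSet θ := by
      have he : g x₁ x₁ = -(f x₂ x₂) := eq_neg_of_add_eq_zero_left hx'
      rw [he]
      exact alt_neg hθ (hfalt x₂)
    have hx1 : x₁ = 0 := by
      by_contra hne
      exact hgd x₁ hne halt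
    have hf0 : f x₂ x₂ = 0 := by
      rw [hx1, h_zero_left hg, zero_add] at hx'
      exact hx'
    have hx2 : x₂ = 0 := hfa _ hf0
    funext i
    refine Fin.addCases (motive := fun i => x i = 0) ?_ ?_ i
    · intro i'; exact congrFun hx1 i'
    · intro j'; exact congrFun hx2 j'

/-- The zero-dimensional form is hermitian, direct, anisotropic and alternating. -/
lemma zero_form_herm (hθ : IsFInvolution F θ) :
    IsHermForm θ 0 (fun _ _ => (0 : D)) := by
  refine ⟨fun _ _ _ => (add_zero 0).symm, fun _ _ _ => (add_zero 0).symm, ?_, ?_⟩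
  · intro _ _ d₁ d₂; rw [mul_zero, zero_mul]
  · intro _ _; exact (theta_zero hθ).symm

lemma zero_mem_dir (hθ : IsFInvolution F θ) :
    (0 : ℕ) ∈ {n : ℕ | ∃ h, IsHermForm θ n h ∧ HermDirect θ n h} := by
  refine ⟨fun _ _ => 0, zero_form_herm hθ, ?_⟩
  intro x hx
  exact absurd (Subsingleton.elim x 0) hx

lemma zero_mem_minus (hθ : IsFInvolution F θ) :
    (0 : ℕ) ∈ {n : ℕ | ∃ h, IsHermForm θ n h ∧ HermAnisotropic n h ∧ HermAlternating θ n h} := by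
  refine ⟨fun _ _ => 0, zero_form_herm hθ, ?_, ?_⟩
  · intro x _; exact Subsingleton.elim x 0
  · intro _; exact alt_zero hθ

end Stmt3Aux

/-- `u⁺(D) = u⁺_d(D) + u⁻(D)` in `ℕ ∪ {∞}`. -/
theorem stmt3 {F D : Type*} [Field F] [CharP F 2] [DivisionRing D] [Algebra F D]
    [FiniteDimensional F D] [Algebra.IsCentral F D]
    (θ : D → D) (hθ : IsFInvolution F θ) :
    uHermPlus θ = uHermPlusDirect θ + uHermMinus θ := by
  refine le_antisymm ?_ ?_
  · refine iSup₂_le ?_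
    intro n hn
    obtain ⟨h, hh, han⟩ := hn
    obtain ⟨k, m, g, w, hkm, hg1, hg2, hwalt, hwind⟩ := Stmt3Aux.key hθ n h hh han
    obtain ⟨f, hf1, hf2, hf3⟩ := Stmt3Aux.minus_of_family hθ hh han w hwalt hwind
    have hk : k ∈ {n : ℕ | ∃ h, IsHermForm θ n h ∧ HermDirect θ n h} := ⟨g, hg1, hg2⟩
    have hm : m ∈ {n : ℕ | ∃ h, IsHermForm θ n h ∧ HermAnisotropic n h
        ∧ HermAlternating θ n h} := ⟨f, hf1, hf2, hf3⟩
    calc (n : ℕ∞) = (k : ℕ∞) + (m : ℕ∞) := by rw [← Nat.cast_add, hkm]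
      _ ≤ uHermPlusDirect θ + uHermMinus θ :=
        add_le_add (le_biSup _ hk) (le_biSup _ hm)
  · refine ENat.biSup_add_biSup_le ⟨0, Stmt3Aux.zero_mem_dir hθ⟩
      ⟨0, Stmt3Aux.zero_mem_minus hθ⟩ ?_
    intro k hk m hm
    obtain ⟨g, hg1, hg2⟩ := hk
    obtain ⟨f, hf1, hf2, hf3⟩ := hm
    obtain ⟨H, hH1, hH2⟩ := Stmt3Aux.glue hθ hg1 hg2 hf1 hf2 hf3
    have hmem : k + m ∈ {n : ℕ | ∃ h, IsHermForm θ n h ∧ HermAnisotropic n h} := ⟨H, hH1, hH2⟩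
    calc (k : ℕ∞) + (m : ℕ∞) = ((k + m : ℕ) : ℕ∞) := (Nat.cast_add k m).symm
      _ ≤ uHermPlus θ := le_biSup _ hmem


end GenQuadForm
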